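/- arXiv:1409.2948 — 3 statements merged into one kernel-verified Lean document; each statement's English description precedes it below -/
import Mathlib

section
/- Let C be an additive category and X a covariantly finite subcategory closed under isomorphisms, sums and summands. Given a commutative diagram of right n-exact sequences A_0 → A_1 → ⋯ → A_{n+1} and B_0 → B_1 → ⋯ → B_{n+1} with vertical morphisms h_0, …, h_{n+1}, where f_0 and g_0 are X-monic and admit special n-cokernels with respect to X, the induced morphisms in the quotient C/X form a morphism of standard right (n+2)-angles; in particular Σ(h_0) ∘ a_{n+1} = b_{n+1} ∘ h_{n+1} in C/X, where a_{n+1}, b_{n+1} are the final comparison maps to Σ A_0 and Σ B_0. -/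
open CategoryTheory Limits

universe v u

variable {C : Type u} [Category.{v} C]

section Defs
variable [Preadditive C]

/-- `g` is a weak cokernel of `f`: `g ∘ f = 0` and every morphism killing `f`
factors (not necessarily uniquely) through `g`. -/
def IsWeakCokernel {A B X : C} (f : A ⟶ B) (g : B ⟶ X) : Prop :=
  f ≫ g = 0 ∧ ∀ ⦃D : C⦄ (h : B ⟶ D), f ≫ h = 0 → ∃ k : X ⟶ D, h = g ≫ k

/-- `g` is a cokernel of `f`. -/
def IsCokernelOf {A B X : C} (f : A ⟶ B) (g : B ⟶ X) : Prop :=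
  f ≫ g = 0 ∧ ∀ ⦃D : C⦄ (h : B ⟶ D), f ≫ h = 0 → ∃! k : X ⟶ D, h = g ≫ k

/-- `f` is a weak kernel of `g`. -/
def IsWeakKernel {A B X : C} (g : B ⟶ X) (f : A ⟶ B) : Prop :=
  f ≫ g = 0 ∧ ∀ ⦃D : C⦄ (h : D ⟶ B), h ≫ g = 0 → ∃ k : D ⟶ A, h = k ≫ f

/-- `f` is a kernel of `g`. -/
def IsKernelOf {A B X : C} (g : B ⟶ X) (f : A ⟶ B) : Prop :=
  f ≫ g = 0 ∧ ∀ ⦃D : C⦄ (h : D ⟶ B), h ≫ g = 0 → ∃! k : D ⟶ A, h = k ≫ f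

/-- The sequence `X 0 → X 1 → ⋯ → X (n+1)` is right `n`-exact, i.e.
`(d 1, …, d n)` is an `n`-cokernel of `d 0`: each `d (k+1)` with `k + 2 ≤ n` is a
weak cokernel of `d k`, and `d n` is a cokernel of `d (n-1)`. -/
def IsRightNExactSeq (n : ℕ) (X : ℕ → C) (d : ∀ i, X i ⟶ X (i + 1)) : Prop :=
  (∀ k, k + 2 ≤ n → IsWeakCokernel (d k) (d (k + 1))) ∧ IsCokernelOf (d (n - 1)) (d (n - 1 + 1))

/-- The sequence `X 0 → X 1 → ⋯ → X (n+1)` is left `n`-exact. -/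
def IsLeftNExactSeq (n : ℕ) (X : ℕ → C) (d : ∀ i, X i ⟶ X (i + 1)) : Prop :=
  (∀ k, k + 2 ≤ n → IsWeakKernel (d (k + 1)) (d k)) ∧ IsKernelOf (d 1) (d 0)

/-- `f : A ⟶ B` is `X`-monic with respect to the subcategory given by the predicate `P`:
every morphism from `A` to an object of `P` factors through `f`. -/
def XMonic (P : C → Prop) {A B : C} (f : A ⟶ B) : Prop :=
  ∀ ⦃M : C⦄, P M → ∀ g : A ⟶ M, ∃ h : B ⟶ M, g = f ≫ h

/-- `f` is `X`-epic. -/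
def XEpic (P : C → Prop) {A B : C} (f : A ⟶ B) : Prop :=
  ∀ ⦃M : C⦄, P M → ∀ g : M ⟶ B, ∃ h : M ⟶ A, g = h ≫ f

/-- `(-1)^k • f`. -/
def psign (k : ℕ) {A B : C} (f : A ⟶ B) : A ⟶ B := if Even k then f else -f

/-- `f : A ⟶ B` has an `n`-cokernel. -/
def HasNCokernel (n : ℕ) {A B : C} (f : A ⟶ B) : Prop :=
  ∃ (X : ℕ → C) (d : ∀ i, X i ⟶ X (i + 1)) (e0 : X 0 = A) (e1 : X 1 = B),
    d 0 = eqToHom e0 ≫ f ≫ eqToHom e1.symm ∧ IsRightNExactSeq n X d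

/-- `f : A ⟶ B` has a special `n`-cokernel with respect to `P`: an `n`-cokernel all of whose
intermediate objects lie in `P`. -/
def HasSpecialNCokernel (P : C → Prop) (n : ℕ) {A B : C} (f : A ⟶ B) : Prop :=
  ∃ (X : ℕ → C) (d : ∀ i, X i ⟶ X (i + 1)) (e0 : X 0 = A) (e1 : X 1 = B),
    d 0 = eqToHom e0 ≫ f ≫ eqToHom e1.symm ∧ IsRightNExactSeq n X d ∧
    ∀ i, 2 ≤ i → i ≤ n → P (X i)

end Defs

section QuotCat
variable [Preadditive C]

/-- Morphisms factoring through an object of the subcategory `P`. -/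
def xSet (P : C → Prop) (A B : C) : Set (A ⟶ B) :=
  {f | ∃ (M : C) (u : A ⟶ M) (v : M ⟶ B), P M ∧ f = u ≫ v}

/-- The ideal `[X](A,B)` of morphisms factoring through `P`, as an additive subgroup
(when `P` is closed under finite direct sums this is just `xSet P A B`). -/
def xSub (P : C → Prop) (A B : C) : AddSubgroup (A ⟶ B) :=
  AddSubgroup.closure (xSet P A B)

lemma xSub_comp_left (P : C → Prop) {A B C' : C} {f : A ⟶ B} (hf : f ∈ xSub P A B)
    (g : B ⟶ C') : f ≫ g ∈ xSub P A C' := by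
  induction hf using AddSubgroup.closure_induction with
  | mem x hx =>
      obtain ⟨M, u, v, hM, rfl⟩ := hx
      exact AddSubgroup.subset_closure ⟨M, u, v ≫ g, hM, by simp⟩
  | zero => simpa using (xSub P A C').zero_mem
  | add x y _ _ hx hy => simpa [Preadditive.add_comp] using (xSub P A C').add_mem hx hy
  | neg x _ hx => simpa [Preadditive.neg_comp] using (xSub P A C').neg_mem hx

lemma xSub_comp_right (P : C → Prop) {A B C' : C} (g : A ⟶ B) {f : B ⟶ C'}
    (hf : f ∈ xSub P B C') : g ≫ f ∈ xSub P A C' := by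
  induction hf using AddSubgroup.closure_induction with
  | mem x hx =>
      obtain ⟨M, u, v, hM, rfl⟩ := hx
      exact AddSubgroup.subset_closure ⟨M, g ≫ u, v, hM, by simp⟩
  | zero => simpa using (xSub P A C').zero_mem
  | add x y _ _ hx hy => simpa [Preadditive.comp_add] using (xSub P A C').add_mem hx hy
  | neg x _ hx => simpa [Preadditive.comp_neg] using (xSub P A C').neg_mem hx

/-- The quotient category `C/X`: same objects as `C`. -/
structure QObj (P : C → Prop) : Type u where
  obj : C

variable (P : C → Prop)

instance QObj.category : Category.{v} (QObj P) where
  Hom A B := (A.obj ⟶ B.obj) ⧸ xSub P A.obj B.obj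
  id A := QuotientAddGroup.mk (𝟙 A.obj)
  comp {A B C'} x y :=
    Quotient.liftOn₂ x y (fun a b => QuotientAddGroup.mk (a ≫ b)) (by
      intro a b a' b' ha hb
      have ha' : -a + a' ∈ xSub P _ _ := QuotientAddGroup.leftRel_apply.mp ha
      have hb' : -b + b' ∈ xSub P _ _ := QuotientAddGroup.leftRel_apply.mp hb
      apply Quotient.sound
      refine QuotientAddGroup.leftRel_apply.mpr ?_
      have : -(a ≫ b) + a' ≫ b' = (-a + a') ≫ b + a' ≫ (-b + b') := by
        simp [Preadditive.add_comp, Preadditive.comp_add]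
      rw [this]
      exact AddSubgroup.add_mem _ (xSub_comp_left P ha' b) (xSub_comp_right P a' hb'))
  id_comp x := by
    induction x using Quotient.inductionOn with
    | h a => exact congrArg QuotientAddGroup.mk (Category.id_comp a)
  comp_id x := by
    induction x using Quotient.inductionOn with
    | h a => exact congrArg QuotientAddGroup.mk (Category.comp_id a)
  assoc x y z := by
    induction x using Quotient.inductionOn with
    | h a =>
      induction y using Quotient.inductionOn with
      | h b =>
        induction z using Quotient.inductionOn with
        | h c => exact congrArg QuotientAddGroup.mk (Category.assoc a b c)

instance QObj.preadditive : Preadditive (QObj P) where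
  homGroup A B := inferInstanceAs (AddCommGroup ((A.obj ⟶ B.obj) ⧸ xSub P A.obj B.obj))
  add_comp A B C' x x' y := by
    induction x using Quotient.inductionOn with
    | h a =>
      induction x' using Quotient.inductionOn with
      | h a' =>
        induction y using Quotient.inductionOn with
        | h b => exact congrArg QuotientAddGroup.mk (Preadditive.add_comp _ _ _ a a' b)
  comp_add A B C' x y y' := by
    induction x using Quotient.inductionOn with
    | h a =>
      induction y using Quotient.inductionOn with
      | h b =>
        induction y' using Quotient.inductionOn with
        | h b' => exact congrArg QuotientAddGroup.mk (Preadditive.comp_add _ _ _ a b b')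

/-- The quotient functor `C ⥤ C/X`. -/
def toQ : C ⥤ QObj P where
  obj A := ⟨A⟩
  map f := QuotientAddGroup.mk f
  map_id _ := rfl
  map_comp _ _ := rfl

/-- Image of an object of `C` in `C/X`. -/
abbrev qObj (A : C) : QObj P := ⟨A⟩

/-- Image of a morphism of `C` in `C/X`. -/
abbrev qMap {A B : C} (f : A ⟶ B) : qObj P A ⟶ qObj P B := QuotientAddGroup.mk f

open ZeroObject in
instance [HasZeroObject C] : HasZeroObject (QObj P) := by
  refine ⟨qObj P 0, ?_⟩
  rw [IsZero.iff_id_eq_zero]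
  have h : (𝟙 (qObj P 0)) = qMap P (𝟙 (0 : C)) := rfl
  rw [h, show (𝟙 (0 : C)) = 0 from by simp]
  exact QuotientAddGroup.mk_zero (xSub P 0 0)

instance [HasBinaryBiproducts C] : HasBinaryBiproducts (QObj P) where
  has_binary_biproduct A B := by
    refine HasBinaryBiproduct.mk ⟨?_, ?_⟩
    · exact
        { pt := qObj P (A.obj ⊞ B.obj)
          fst := qMap P biprod.fst
          snd := qMap P biprod.snd
          inl := qMap P biprod.inl
          inr := qMap P biprod.inr
          inl_fst := congrArg (QuotientAddGroup.mk) biprod.inl_fst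
          inl_snd := congrArg (QuotientAddGroup.mk) biprod.inl_snd
          inr_fst := congrArg (QuotientAddGroup.mk) biprod.inr_fst
          inr_snd := congrArg (QuotientAddGroup.mk) biprod.inr_snd }
    · apply isBinaryBilimitOfTotal
      show qMap P biprod.fst ≫ qMap P biprod.inl + qMap P biprod.snd ≫ qMap P biprod.inr = qMap P (𝟙 _)
      show qMap P (biprod.fst ≫ biprod.inl) + qMap P (biprod.snd ≫ biprod.inr) = _
      rw [show qMap P (biprod.fst ≫ biprod.inl) + qMap P (biprod.snd ≫ biprod.inr)
            = qMap P (biprod.fst ≫ biprod.inl + biprod.snd ≫ biprod.inr) from rfl]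
      exact congrArg QuotientAddGroup.mk biprod.total

end QuotCat

/-- Lemma 3.3. In the setting of Theorem 3.4 (with the chosen sequences
`A = XX A 0 → XX A 1 → ⋯ → XX A (n+1)` defining `Σ`), a commutative diagram of right
`n`-exact sequences with `X`-monic first morphisms induces a morphism of standard right
`(n+2)`-angles in `C/X`; in particular `Σ(h 0) ∘ a (n+1) = b (n+1) ∘ h (n+1)` in `C/X`,
where `Σ (h 0)` is (the class of) `u (n+1)` for any lift `u` of `h 0` along the chosen
sequences, and `a (n+1)`, `b (n+1)` are the comparison maps to `Σ (A 0)`, `Σ (B 0)`. -/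
theorem morphism_of_standard_angles
    [Preadditive C] [HasZeroObject C] [HasFiniteBiproducts C] [HasBinaryBiproducts C]
    (P : C → Prop) (n : ℕ) (hn : 1 ≤ n)
    (hPiso : ∀ {A B : C}, P A → (A ≅ B) → P B)
    (hPsum : ∀ {A B : C}, P A → P B → P (A ⊞ B))
    (hPsummand : ∀ {A M : C}, P M → ∀ (i : A ⟶ M) (p : M ⟶ A), i ≫ p = 𝟙 A → P A)
    (hSpecial : ∀ {A M : C} (f : A ⟶ M), P M → XMonic P f → HasSpecialNCokernel P n f)
    -- the chosen sequences defining `Σ`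
    (XX : C → ℕ → C) (dd : ∀ A i, XX A i ⟶ XX A (i + 1)) (eX : ∀ A : C, XX A 0 = A)
    (hXexact : ∀ A, IsRightNExactSeq n (XX A) (dd A))
    (hXP : ∀ A i, 1 ≤ i → i ≤ n → P (XX A i))
    (hXmono : ∀ A, XMonic P (dd A 0))
    -- the two rows, right `n`-exact with `X`-monic first morphisms
    (A B : ℕ → C) (f : ∀ i, A i ⟶ A (i + 1)) (g : ∀ i, B i ⟶ B (i + 1))
    (hA : IsRightNExactSeq n A f) (hB : IsRightNExactSeq n B g)
    (hf0 : XMonic P (f 0)) (hg0 : XMonic P (g 0))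
    -- the connecting morphism of complexes
    (h : ∀ i, A i ⟶ B i) (hcomm : ∀ i, f i ≫ h (i + 1) = h i ≫ g i)
    -- the comparison morphisms with the chosen sequences
    (a : ∀ i, A i ⟶ XX (A 0) i) (ha0 : a 0 = eqToHom (eX (A 0)).symm)
    (ha : ∀ i, f i ≫ a (i + 1) = a i ≫ dd (A 0) i)
    (b : ∀ i, B i ⟶ XX (B 0) i) (hb0 : b 0 = eqToHom (eX (B 0)).symm)
    (hb : ∀ i, g i ≫ b (i + 1) = b i ≫ dd (B 0) i)
    -- any lift of `h 0` along the chosen sequences (defining `Σ (h 0)`)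
    (u : ∀ i, XX (A 0) i ⟶ XX (B 0) i)
    (hu0 : u 0 = eqToHom (eX (A 0)) ≫ h 0 ≫ eqToHom (eX (B 0)).symm)
    (hu : ∀ i, dd (A 0) i ≫ u (i + 1) = u i ≫ dd (B 0) i) :
    (∀ i, qMap P (f i) ≫ qMap P (h (i + 1)) = qMap P (h i) ≫ qMap P (g i)) ∧
    qMap P (a (n + 1)) ≫ qMap P (u (n + 1)) = qMap P (h (n + 1)) ≫ qMap P (b (n + 1)) := by
  constructor
  · intro i
    exact congrArg QuotientAddGroup.mk (hcomm i)
  -- the difference morphism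
  set φ : ∀ i, A i ⟶ XX (B 0) i := fun i => a i ≫ u i - h i ≫ b i with hφdef
  have hφ0 : φ 0 = 0 := by
    simp [hφdef, ha0, hb0, hu0]
  have hφ : ∀ i, f i ≫ φ (i + 1) = φ i ≫ dd (B 0) i := by
    intro i
    have e1 : f i ≫ a (i + 1) ≫ u (i + 1) = (a i ≫ u i) ≫ dd (B 0) i := by
      rw [← Category.assoc, ha i, Category.assoc, hu i, ← Category.assoc]
    have e2 : f i ≫ h (i + 1) ≫ b (i + 1) = (h i ≫ b i) ≫ dd (B 0) i := by
      rw [← Category.assoc, hcomm i, Category.assoc, hb i, ← Category.assoc]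
    simp only [hφdef, Preadditive.comp_sub, Preadditive.sub_comp, e1, e2]
  -- weak cokernels for all indices up to n
  have wc : ∀ k, k + 1 ≤ n → IsWeakCokernel (f k) (f (k + 1)) := by
    intro k hk
    by_cases h2 : k + 2 ≤ n
    · exact hA.1 k h2
    · have hk1 : k = n - 1 := by omega
      subst hk1
      exact ⟨hA.2.1, fun D m hm => (hA.2.2 m hm).exists⟩
  -- composition of consecutive differentials of the chosen sequence vanishes
  have ddz : ∀ k, k + 1 ≤ n → dd (B 0) k ≫ dd (B 0) (k + 1) = 0 := by
    intro k hk
    by_cases h2 : k + 2 ≤ n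
    · exact ((hXexact (B 0)).1 k h2).1
    · have hk1 : k = n - 1 := by omega
      subst hk1
      exact (hXexact (B 0)).2.1
  -- key homotopy-style induction
  have key : ∀ j, j ≤ n → ∃ s : A (j + 1) ⟶ XX (B 0) j,
      f j ≫ (φ (j + 1) - s ≫ dd (B 0) j) = 0 := by
    intro j
    induction j with
    | zero =>
      intro _
      refine ⟨0, ?_⟩
      rw [Limits.zero_comp, sub_zero, hφ 0, hφ0, Limits.zero_comp]
    | succ j ih =>
      intro hj
      obtain ⟨s, hs⟩ := ih (by omega)
      obtain ⟨t, ht⟩ := (wc j hj).2 _ hs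
      refine ⟨t, ?_⟩
      have h1 : φ (j + 1) - f (j + 1) ≫ t = s ≫ dd (B 0) j := by
        rw [← ht]; abel
      rw [Preadditive.comp_sub, hφ (j + 1), ← Category.assoc,
        ← Preadditive.sub_comp, h1, Category.assoc, ddz j hj, Limits.comp_zero]
  obtain ⟨s, hs⟩ := key n le_rfl
  -- `f n` is an epimorphism, being a cokernel
  obtain ⟨m, rfl⟩ : ∃ m, n = m + 1 := ⟨n - 1, by omega⟩
  have hA2 : IsCokernelOf (f m) (f (m + 1)) := hA.2
  have hepi : φ (m + 1 + 1) = s ≫ dd (B 0) (m + 1) := by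
    have h0 : f m ≫ (f (m + 1) ≫ (s ≫ dd (B 0) (m + 1))) = 0 := by
      rw [← Category.assoc, hA2.1, Limits.zero_comp]
    obtain ⟨k, hk, huniq⟩ := hA2.2 _ h0
    have heq : f (m + 1) ≫ φ (m + 1 + 1) = f (m + 1) ≫ (s ≫ dd (B 0) (m + 1)) := by
      rw [← sub_eq_zero, ← Preadditive.comp_sub]
      exact hs
    exact (huniq (φ (m + 1 + 1)) heq.symm).trans (huniq (s ≫ dd (B 0) (m + 1)) rfl).symm
  -- conclude in the quotient category
  show qMap P (a (m + 1 + 1) ≫ u (m + 1 + 1)) = qMap P (h (m + 1 + 1) ≫ b (m + 1 + 1))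
  refine (QuotientAddGroup.eq_iff_sub_mem).mpr ?_
  have hmem : φ (m + 1 + 1) ∈ xSub P (A (m + 1 + 1)) (XX (B 0) (m + 1 + 1)) := by
    rw [hepi]
    exact AddSubgroup.subset_closure
      ⟨XX (B 0) (m + 1), s, dd (B 0) (m + 1), hXP (B 0) (m + 1) (by omega) le_rfl, rfl⟩
  exact hmem
end

section
/- In the setting of Theorem 3.4, for each object A of C, the trivial sequence A →^{1_A} A → 0 → ⋯ → 0 → Σ A is a right (n+2)-angle in C/X (axiom RN1(b)). -/
open CategoryTheory Limits

universe v u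

variable {C : Type u} [Category.{v} C]

section Angulated
set_option linter.unusedSectionVars false
open ZeroObject
variable [Preadditive C]

/-- An `m`-`Σ`-sequence `X 0 → X 1 → ⋯ → X (m-1) → S.obj (X 0)`, encoded as a
`Σ`-periodic complex: `X (m+i) = S.obj (X i)` and `f (m+i) = (-1)^m • S.map (f i)`
(the sign convention of left rotation is built into the periodicity). -/
structure PSeq (m : ℕ) (S : C ⥤ C) where
  X : ℕ → C
  f : ∀ i, X i ⟶ X (i + 1)
  per : ∀ i, X (m + i) = S.obj (X i)
  fper : ∀ i, f (m + i) = eqToHom (per i) ≫ psign m (S.map (f i)) ≫ eqToHom (per (i + 1)).symm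

variable {m : ℕ} {S : C ⥤ C}

/-- The last structural morphism `X (m-1) ⟶ S.obj (X 0)` of an `m`-`Σ`-sequence. -/
def PSeq.wmap (T : PSeq m S) (hm : 1 ≤ m) : T.X (m - 1) ⟶ S.obj (T.X 0) :=
  T.f (m - 1) ≫ eqToHom (by rw [show m - 1 + 1 = m + 0 by omega]; exact T.per 0)

/-- Left rotation of an `m`-`Σ`-sequence. -/
def PSeq.rot (T : PSeq m S) : PSeq m S where
  X i := T.X (i + 1)
  f i := T.f (i + 1)
  per i := T.per (i + 1)
  fper i := T.fper (i + 1)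

/-- A morphism of `m`-`Σ`-sequences. -/
structure SeqHomP (T U : PSeq m S) where
  φ : ∀ i, T.X i ⟶ U.X i
  comm : ∀ i, T.f i ≫ φ (i + 1) = φ i ≫ U.f i
  compat : ∀ i, φ (m + i) = eqToHom (T.per i) ≫ S.map (φ i) ≫ eqToHom (U.per i).symm

/-- Isomorphism of `m`-`Σ`-sequences. -/
def SeqIsoP (T U : PSeq m S) : Prop :=
  ∃ h : SeqHomP T U, ∀ i, IsIso (h.φ i)

/-- `V` is a direct sum of the `m`-`Σ`-sequences `T` and `U`. -/
def IsDirectSumOf (V T U : PSeq m S) : Prop :=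
  ∃ (p : SeqHomP V T) (q : SeqHomP V U) (s : SeqHomP T V) (t : SeqHomP U V),
    (∀ i, s.φ i ≫ p.φ i = 𝟙 _) ∧ (∀ i, t.φ i ≫ q.φ i = 𝟙 _) ∧
    (∀ i, s.φ i ≫ q.φ i = 0) ∧ (∀ i, t.φ i ≫ p.φ i = 0) ∧
    (∀ i, p.φ i ≫ s.φ i + q.φ i ≫ t.φ i = 𝟙 _)

/-- The `m`-`Σ`-sequence `T` has window `A 0 → A 1 → ⋯ → A (m-1) → S.obj (A 0)`. -/
def IsWindowOf (hm : 1 ≤ m) (T : PSeq m S) (A : ℕ → C) (d : ∀ i, A i ⟶ A (i + 1))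
    (w : A (m - 1) ⟶ S.obj (A 0)) : Prop :=
  ∃ e : ∀ j, j ≤ m - 1 → T.X j = A j,
    (∀ j (hj : j + 2 ≤ m),
      T.f j = eqToHom (e j (by omega)) ≫ d j ≫ eqToHom (e (j + 1) (by omega)).symm) ∧
    T.wmap hm ≫ eqToHom (congrArg S.obj (e 0 (by omega))) = eqToHom (e (m - 1) le_rfl) ≫ w

section Oct
variable [HasZeroObject C] [HasBinaryBiproducts C]
variable (T U V : PSeq m S)

/-- First padded component of the higher mapping cone of (RN4). -/
noncomputable def padT (j : ℕ) : C := if j + 2 ≤ m - 1 then T.X (j + 2) else 0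

/-- Second padded component. -/
noncomputable def padU (j : ℕ) : C := if 1 ≤ j ∧ j + 1 ≤ m - 1 then U.X (j + 1) else 0

/-- Third padded component. -/
noncomputable def padV (j : ℕ) : C := if (2 ≤ j ∧ j ≤ m - 1) ∨ j = m - 2 then V.X j else 0

lemma padT_eq {j : ℕ} (h : j + 2 ≤ m - 1) : padT (m := m) T j = T.X (j + 2) := if_pos h
lemma padU_eq {j : ℕ} (h : 1 ≤ j ∧ j + 1 ≤ m - 1) : padU (m := m) U j = U.X (j + 1) := if_pos h
lemma padV_eq {j : ℕ} (h : (2 ≤ j ∧ j ≤ m - 1) ∨ j = m - 2) : padV (m := m) V j = V.X j :=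
  if_pos h

/-- Objects of the higher mapping cone of (RN4) (padded by zero objects). -/
noncomputable def coneObjOct (j : ℕ) : C := (padT T j ⊞ padU U j) ⊞ padV V j

variable (φ : ∀ i, T.X i ⟶ U.X i) (ψ : ∀ i, U.X i ⟶ V.X i) (θ : ∀ i, T.X (i + 1) ⟶ V.X i)

/-- `T`–`T` entry of the cone differential: `f 3` (resp. `-f (j+2)`). -/
noncomputable def entTT (j : ℕ) : padT (m := m) T j ⟶ padT (m := m) T (j + 1) :=
  if h : j + 2 ≤ m - 1 ∧ j + 3 ≤ m - 1 then
    eqToHom (padT_eq T h.1) ≫ (if j = 0 then T.f (j + 2) else -T.f (j + 2)) ≫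
      eqToHom (padT_eq T h.2).symm
  else 0

/-- `T`–`U` entry: `± φ (j+2)`. -/
noncomputable def entTU (j : ℕ) : padT (m := m) T j ⟶ padU (m := m) U (j + 1) :=
  if h : j + 2 ≤ m - 1 then
    eqToHom (padT_eq T h) ≫
      (if j = 0 ∧ 4 ≤ m then φ (j + 2) else psign (j + 1) (φ (j + 2))) ≫
      eqToHom (padU_eq U ⟨by omega, by omega⟩).symm
  else 0

/-- `T`–`V` entry: `θ (j+1)`. -/
noncomputable def entTV (j : ℕ) : padT (m := m) T j ⟶ padV (m := m) V (j + 1) :=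
  if h : (j + 2 ≤ m - 1) ∧ ((2 ≤ j + 1 ∧ j + 1 ≤ m - 1) ∨ j + 1 = m - 2) then
    eqToHom (padT_eq T h.1) ≫ θ (j + 1) ≫ eqToHom (padV_eq V h.2).symm
  else 0

/-- `U`–`U` entry: `-g (j+1)`. -/
noncomputable def entUU (j : ℕ) : padU (m := m) U j ⟶ padU (m := m) U (j + 1) :=
  if h : (1 ≤ j ∧ j + 1 ≤ m - 1) ∧ (1 ≤ j + 1 ∧ j + 2 ≤ m - 1) then
    eqToHom (padU_eq U h.1) ≫ (-U.f (j + 1)) ≫ eqToHom (padU_eq U h.2).symm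
  else 0

/-- `U`–`V` entry: `ψ (j+1)`. -/
noncomputable def entUV (j : ℕ) : padU (m := m) U j ⟶ padV (m := m) V (j + 1) :=
  if h : (1 ≤ j ∧ j + 1 ≤ m - 1) ∧ ((2 ≤ j + 1 ∧ j + 1 ≤ m - 1) ∨ j + 1 = m - 2) then
    eqToHom (padU_eq U h.1) ≫ ψ (j + 1) ≫ eqToHom (padV_eq V h.2).symm
  else 0

/-- `V`–`V` entry: `h (j)`. -/
noncomputable def entVV (j : ℕ) : padV (m := m) V j ⟶ padV (m := m) V (j + 1) :=
  if h : ((2 ≤ j ∧ j ≤ m - 1) ∨ j = m - 2) ∧ ((2 ≤ j + 1 ∧ j + 1 ≤ m - 1) ∨ j + 1 = m - 2) then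
    eqToHom (padV_eq V h.1) ≫ V.f j ≫ eqToHom (padV_eq V h.2).symm
  else 0

/-- The differentials of the higher mapping cone of (RN4): the lower-triangular matrices
`[[±f, 0, 0], [±φ, -g, 0], [θ, ψ, h]]` of the paper. -/
noncomputable def coneMapOct (j : ℕ) : coneObjOct (m := m) T U V j ⟶ coneObjOct (m := m) T U V (j + 1) :=
  biprod.desc
    (biprod.desc
      (biprod.lift (biprod.lift (entTT T j) (entTU T U φ j)) (entTV T V θ j))
      (biprod.lift (biprod.lift 0 (entUU U j)) (entUV U V ψ j)))
    (biprod.lift (biprod.lift 0 0) (entVV V j))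

/-- The last morphism of the higher mapping cone: `Σ f 2 ∘ h (m-1)`. -/
noncomputable def coneLastOct (hm : 3 ≤ m) (eV0 : V.X 0 = T.X 1) :
    coneObjOct (m := m) T U V (m - 1) ⟶ S.obj (coneObjOct (m := m) T U V 0) :=
  biprod.snd ≫ eqToHom (padV_eq V (by omega)) ≫ V.wmap (by omega) ≫
    eqToHom (congrArg S.obj eV0) ≫ S.map (T.f 1) ≫
    S.map (eqToHom (padT_eq T (by omega : 0 + 2 ≤ m - 1)).symm ≫ biprod.inl ≫ biprod.inl)

end Oct

/-- The higher octahedral axiom (RN4). -/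
def OctCondition (m : ℕ) (hm : 3 ≤ m) [HasZeroObject C] [HasBinaryBiproducts C]
    (S : C ⥤ C) (Θ : Set (PSeq m S)) : Prop :=
  ∀ (T U V : PSeq m S), T ∈ Θ → U ∈ Θ → V ∈ Θ →
  ∀ (e0 : U.X 0 = T.X 0) (eV0 : V.X 0 = T.X 1) (eV1 : V.X 1 = U.X 1),
    U.f 0 = eqToHom e0 ≫ T.f 0 ≫ eqToHom eV0.symm ≫ V.f 0 ≫ eqToHom eV1 →
    ∃ (h : SeqHomP T U) (ψ : ∀ i, U.X i ⟶ V.X i) (θ : ∀ i, T.X (i + 1) ⟶ V.X i),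
      h.φ 0 = eqToHom e0.symm ∧
      h.φ 1 = eqToHom eV0.symm ≫ V.f 0 ≫ eqToHom eV1 ∧
      (ψ (m - 1) ≫ V.wmap (by omega) ≫ eqToHom (congrArg S.obj eV0) =
        U.wmap (by omega) ≫ eqToHom (congrArg S.obj e0) ≫ S.map (T.f 0)) ∧
      ∃ W ∈ Θ, ∃ e : ∀ j, j ≤ m - 1 → W.X j = coneObjOct T U V j,
        (∀ j (hj : j + 2 ≤ m),
          W.f j = eqToHom (e j (by omega)) ≫ coneMapOct T U V h.φ ψ θ j ≫
            eqToHom (e (j + 1) (by omega)).symm) ∧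
        (W.wmap (by omega) ≫ eqToHom (congrArg S.obj (e 0 (by omega))) =
          eqToHom (e (m - 1) le_rfl) ≫ coneLastOct T U V hm eV0)

/-- A right `m`-angulated structure: `(C, S, Θ)` satisfies the axioms (RN1)–(RN4). -/
structure IsRightAngulated (m : ℕ) [HasZeroObject C] [HasBinaryBiproducts C]
    (S : C ⥤ C) (Θ : Set (PSeq m S)) : Prop where
  hm : 3 ≤ m
  /-- (RN1)(a): closed under isomorphisms -/
  isoClosed : ∀ T ∈ Θ, ∀ U, SeqIsoP T U → U ∈ Θ
  /-- (RN1)(a): closed under direct sums -/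
  sumClosed : ∀ T ∈ Θ, ∀ U ∈ Θ, ∀ V, IsDirectSumOf V T U → V ∈ Θ
  /-- (RN1)(a): closed under direct summands -/
  summandClosed : ∀ V ∈ Θ, ∀ T U, IsDirectSumOf V T U → T ∈ Θ
  /-- (RN1)(b): trivial sequences -/
  trivialMem : ∀ A : C, ∃ T ∈ Θ, ∃ (e0 : T.X 0 = A) (e1 : T.X 1 = A),
    T.f 0 = eqToHom (e0.trans e1.symm) ∧ ∀ i, 2 ≤ i → i ≤ m - 1 → IsZero (T.X i)
  /-- (RN1)(c): every morphism is the first morphism of a right `m`-angle -/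
  extend : ∀ {A B : C} (u : A ⟶ B), ∃ T ∈ Θ, ∃ (e0 : T.X 0 = A) (e1 : T.X 1 = B),
    T.f 0 = eqToHom e0 ≫ u ≫ eqToHom e1.symm
  /-- (RN2): closed under left rotation -/
  rotate : ∀ T ∈ Θ, T.rot ∈ Θ
  /-- (RN3): completion of commutative squares -/
  complete : ∀ T ∈ Θ, ∀ U ∈ Θ, ∀ (φ0 : T.X 0 ⟶ U.X 0) (φ1 : T.X 1 ⟶ U.X 1),
    T.f 0 ≫ φ1 = φ0 ≫ U.f 0 → ∃ h : SeqHomP T U, h.φ 0 = φ0 ∧ h.φ 1 = φ1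
  /-- (RN4): higher octahedral axiom -/
  oct : OctCondition m hm S Θ

/-- An `m`-angulated structure in the sense of Geiss–Keller–Oppermann: a right
`m`-angulated structure in which `S` is an equivalence and the rotation condition
is necessary and sufficient. -/
def IsNAngulated (m : ℕ) [HasZeroObject C] [HasBinaryBiproducts C]
    (S : C ⥤ C) (Θ : Set (PSeq m S)) : Prop :=
  IsRightAngulated m S Θ ∧ S.IsEquivalence ∧ ∀ T : PSeq m S, T.rot ∈ Θ → T ∈ Θ

end Angulated

section PerExtAux

variable {D : Type*} [Category D] [Preadditive D]

lemma psign_comp (k : ℕ) {A B C' : D} (f : A ⟶ B) (g : B ⟶ C') :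
    psign k (f ≫ g) = psign k f ≫ g := by
  unfold psign; split <;> simp

lemma comp_psign (k : ℕ) {A B C' : D} (f : A ⟶ B) (g : B ⟶ C') :
    psign k (f ≫ g) = f ≫ psign k g := by
  unfold psign; split <;> simp

lemma psign_congr (k : ℕ) {A B : D} {f g : A ⟶ B} (h : f = g) : psign k f = psign k g := by
  rw [h]

lemma isIso_of_isZero {X Y : D} (hX : IsZero X) (hY : IsZero Y) (f : X ⟶ Y) : IsIso f :=
  ⟨hY.to_ X, hX.eq_of_src _ _, hY.eq_of_src _ _⟩

variable (S : D ⥤ D) (m : ℕ) (B : ℕ → D)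

/-- Periodic extension of objects. -/
def perX (hm : 0 < m) (j : ℕ) : D :=
  if _ : j < m then B j else S.obj (perX hm (j - m))
termination_by j
decreasing_by omega

lemma perX_lt (hm : 0 < m) {j : ℕ} (h : j < m) : perX S m B hm j = B j := by
  rw [perX, dif_pos h]

lemma perX_ge (hm : 0 < m) {j : ℕ} (h : m ≤ j) :
    perX S m B hm j = S.obj (perX S m B hm (j - m)) := by
  rw [perX, dif_neg (by omega)]

lemma perX_add (hm : 0 < m) (i : ℕ) :
    perX S m B hm (m + i) = S.obj (perX S m B hm i) := by
  rw [perX_ge S m B hm (Nat.le_add_right m i), show m + i - m = i from by omega]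

variable (g : ∀ r, B r ⟶ B (r + 1)) (w : B (m - 1) ⟶ S.obj (B 0))

/-- Periodic extension of morphisms. -/
def perF (hm : 0 < m) (j : ℕ) : perX S m B hm j ⟶ perX S m B hm (j + 1) :=
  if h : j + 1 < m then
    eqToHom (perX_lt S m B hm (by omega)) ≫ g j ≫ eqToHom (perX_lt S m B hm h).symm
  else if h2 : j + 1 = m then
    eqToHom ((perX_lt S m B hm (by omega)).trans (by rw [show j = m - 1 from by omega]))
      ≫ w ≫
      eqToHom (show perX S m B hm (j + 1) = S.obj (B 0) by
        rw [perX_ge S m B hm (by omega), show j + 1 - m = 0 from by omega,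
          perX_lt S m B hm hm]).symm
  else
    eqToHom (perX_ge S m B hm (by omega)) ≫ psign m (S.map (perF hm (j - m))) ≫
      eqToHom (show perX S m B hm (j + 1) = S.obj (perX S m B hm (j - m + 1)) by
        rw [perX_ge S m B hm (by omega), show j + 1 - m = j - m + 1 from by omega]).symm
termination_by j
decreasing_by omega

lemma perF_congr (hm : 0 < m) {j j' : ℕ} (h : j = j') :
    perF S m B g w hm j =
      eqToHom (by rw [h]) ≫ perF S m B g w hm j' ≫ eqToHom (by rw [h]) := by
  subst h; simp

lemma perF_add (hm : 0 < m) (i : ℕ) :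
    perF S m B g w hm (m + i) =
      eqToHom (perX_add S m B hm i) ≫ psign m (S.map (perF S m B g w hm i)) ≫
        eqToHom (perX_add S m B hm (i + 1)).symm := by
  conv_lhs => rw [perF]
  rw [dif_neg (by omega), dif_neg (by omega),
    perF_congr S m B g w hm (show m + i - m = i from by omega)]
  rw [S.map_comp, S.map_comp, eqToHom_map, eqToHom_map, comp_psign, psign_comp]
  simp only [Category.assoc, eqToHom_trans, eqToHom_trans_assoc]

/-- The periodic `m`-`Σ`-sequence determined by base data. -/
def thePSeq (hm : 0 < m) : PSeq m S where
  X := perX S m B hm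
  f := perF S m B g w hm
  per := perX_add S m B hm
  fper := perF_add S m B g w hm

variable (T : PSeq m S)

/-- Periodic extension of a morphism of sequences. -/
def perPhi (hm : 0 < m) (b : ∀ j, j < m → (perX S m B hm j ⟶ T.X j)) (j : ℕ) :
    perX S m B hm j ⟶ T.X j :=
  if h : j < m then b j h
  else
    eqToHom (perX_ge S m B hm (by omega)) ≫ S.map (perPhi hm b (j - m)) ≫
      eqToHom ((T.per (j - m)).symm.trans (congrArg T.X (by omega)))
termination_by j
decreasing_by omega

lemma perPhi_congr (hm : 0 < m) (b : ∀ j, j < m → (perX S m B hm j ⟶ T.X j))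
    {j j' : ℕ} (h : j = j') :
    perPhi S m B T hm b j =
      eqToHom (by rw [h]) ≫ perPhi S m B T hm b j' ≫ eqToHom (by rw [h]) := by
  subst h; simp

lemma perPhi_add (hm : 0 < m) (b : ∀ j, j < m → (perX S m B hm j ⟶ T.X j)) (i : ℕ) :
    perPhi S m B T hm b (m + i) =
      eqToHom (perX_add S m B hm i) ≫ S.map (perPhi S m B T hm b i) ≫
        eqToHom (T.per i).symm := by
  conv_lhs => rw [perPhi]
  rw [dif_neg (by omega), perPhi_congr S m B T hm b (show m + i - m = i from by omega)]
  rw [S.map_comp, S.map_comp, eqToHom_map, eqToHom_map]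
  simp only [Category.assoc, eqToHom_trans, eqToHom_trans_assoc]

lemma perPhi_isIso (hm : 0 < m) (b : ∀ j, j < m → (perX S m B hm j ⟶ T.X j))
    (hb : ∀ j (h : j < m), IsIso (b j h)) (j : ℕ) :
    IsIso (perPhi S m B T hm b j) := by
  induction j using Nat.strong_induction_on with
  | _ j ih =>
    rw [perPhi]
    split
    · exact hb j ‹_›
    · haveI := ih (j - m) (by omega)
      infer_instance

lemma perPhi_comm (hm : 0 < m) (b : ∀ j, j < m → (perX S m B hm j ⟶ T.X j))
    (hb : ∀ i, i < m → perF S m B g w hm i ≫ perPhi S m B T hm b (i + 1) =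
      perPhi S m B T hm b i ≫ T.f i) (i : ℕ) :
    perF S m B g w hm i ≫ perPhi S m B T hm b (i + 1) = perPhi S m B T hm b i ≫ T.f i := by
  induction i using Nat.strong_induction_on with
  | _ i ih =>
    by_cases h : i < m
    · exact hb i h
    · obtain ⟨i', rfl⟩ : ∃ i', i = m + i' := ⟨i - m, by omega⟩
      have key := ih i' (by omega)
      have hphi : perPhi S m B T hm b (m + i' + 1) =
          eqToHom (perX_add S m B hm (i' + 1)) ≫ S.map (perPhi S m B T hm b (i' + 1)) ≫
            eqToHom (T.per (i' + 1)).symm := perPhi_add S m B T hm b (i' + 1)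
      rw [perF_add, T.fper i', hphi, perPhi_add S m B T hm b i']
      simp only [Category.assoc, eqToHom_trans_assoc, eqToHom_refl, Category.id_comp]
      congr 1
      rw [← Category.assoc, ← psign_comp, ← S.map_comp, key, S.map_comp, comp_psign,
        Category.assoc]

end PerExtAux

section TrivSeq
open ZeroObject
variable [Preadditive C] [HasZeroObject C]

/-- Objects of the trivial sequence `A → A → 0 → ⋯`. -/
noncomputable def trivSeqObj (A : C) : ℕ → C
  | 0 => A
  | 1 => A
  | _ + 2 => 0

/-- Morphisms of the trivial sequence. -/
noncomputable def trivSeqMap (A : C) : ∀ j, trivSeqObj A j ⟶ trivSeqObj A (j + 1)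
  | 0 => 𝟙 A
  | _ + 1 => 0

lemma trivSeqObj_zero (A : C) {j : ℕ} (h : 2 ≤ j) : IsZero (trivSeqObj A j) := by
  obtain ⟨k, rfl⟩ : ∃ k, j = k + 2 := ⟨j - 2, by omega⟩
  exact isZero_zero C

/-- Comparison maps from the trivial sequence to the chosen resolution. -/
noncomputable def trivCmp (XX : C → ℕ → C) (dd : ∀ A i, XX A i ⟶ XX A (i + 1))
    (eX : ∀ A : C, XX A 0 = A) (A : C) : ∀ i, trivSeqObj A i ⟶ XX A i
  | 0 => eqToHom (eX A).symm
  | 1 => eqToHom (eX A).symm ≫ dd A 0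
  | _ + 2 => 0

end TrivSeq

section QZero
variable [Preadditive C]

lemma isZero_qObj (P : C → Prop) {M : C} (hM : IsZero M) : IsZero (qObj P M) := by
  rw [IsZero.iff_id_eq_zero]
  have h1 : (𝟙 (qObj P M)) = qMap P (𝟙 M) := rfl
  rw [h1, hM.eq_of_src (𝟙 M) 0]
  rfl

end QZero

section StdTriv
variable [Preadditive C] [HasZeroObject C]

/-- Base objects of the trivial sequence in `C/X`. -/
noncomputable def trivB (P : C → Prop) (A : C) : ℕ → QObj P := fun j => qObj P (trivSeqObj A j)

/-- Base morphisms of the trivial sequence in `C/X`. -/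
noncomputable def trivG (P : C → Prop) (A : C) : ∀ r, trivB P A r ⟶ trivB P A (r + 1) :=
  fun r => qMap P (trivSeqMap A r)

/-- Last morphism of the trivial sequence in `C/X`. -/
noncomputable def trivW (P : C → Prop) (A : C) (XX : C → ℕ → C) (dd : ∀ A i, XX A i ⟶ XX A (i + 1))
    (eX : ∀ A : C, XX A 0 = A) (n : ℕ) (S : QObj P ⥤ QObj P)
    (hobj : ∀ A : C, S.obj (qObj P A) = qObj P (XX A (n + 1))) :
    trivB P A (n + 2 - 1) ⟶ S.obj (trivB P A 0) :=
  psign n (qMap P (trivCmp XX dd eX A (n + 1))) ≫ eqToHom (hobj A).symm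

/-- Base components of the comparison morphism to the trivial `(n+2)`-angle. -/
noncomputable def stdBase (P : C → Prop) (A : C) {m : ℕ} {S : QObj P ⥤ QObj P} (T : PSeq m S)
    (e0 : T.X 0 = qObj P A) (e1 : T.X 1 = qObj P A) :
    ∀ j, trivB P A j ⟶ T.X j
  | 0 => eqToHom e0.symm
  | 1 => eqToHom e1.symm
  | _ + 2 => 0

end StdTriv

section Thm34
variable [Preadditive C] [HasZeroObject C] [HasFiniteBiproducts C] [HasBinaryBiproducts C]

/-- A standard right `(n+2)`-angle in `C/X` (see Theorem 3.4). -/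
def IsStdAngle (P : C → Prop) (n : ℕ)
    (XX : C → ℕ → C) (dd : ∀ A i, XX A i ⟶ XX A (i + 1)) (eX : ∀ A : C, XX A 0 = A)
    (S : QObj P ⥤ QObj P)
    (hobj : ∀ A : C, S.obj (qObj P A) = qObj P (XX A (n + 1)))
    (U : PSeq (C := QObj P) (n + 2) S) : Prop :=
  ∃ (A : ℕ → C) (f : ∀ i, A i ⟶ A (i + 1)) (a : ∀ i, A i ⟶ XX (A 0) i),
    IsRightNExactSeq n A f ∧ XMonic P (f 0) ∧
    a 0 = eqToHom (eX (A 0)).symm ∧ (∀ i, f i ≫ a (i + 1) = a i ≫ dd (A 0) i) ∧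
    IsWindowOf (by omega) U (fun j => qObj P (A j)) (fun j => qMap P (f j))
      (psign n (qMap P (a (n + 1))) ≫ eqToHom (hobj (A 0)).symm)

/-- RN1(b) in Theorem 3.4. For each object `A` of `C`, the trivial
sequence `A → A → 0 → ⋯ → 0 → Σ A` is a right `(n+2)`-angle in `C/X`, i.e. it is
isomorphic to a standard right `(n+2)`-angle. -/
theorem trivial_sequence_is_right_angle
    (P : C → Prop) (n : ℕ) (hn : 1 ≤ n)
    (hPiso : ∀ {A B : C}, P A → (A ≅ B) → P B)
    (hPsum : ∀ {A B : C}, P A → P B → P (A ⊞ B))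
    (hPsummand : ∀ {A M : C}, P M → ∀ (i : A ⟶ M) (p : M ⟶ A), i ≫ p = 𝟙 A → P A)
    (hCov : ∀ A : C, ∃ (M : C) (f : A ⟶ M), P M ∧ XMonic P f)
    (hNCok : ∀ {A B : C} (f : A ⟶ B), XMonic P f → HasNCokernel n f)
    (hSpecial : ∀ {A M : C} (f : A ⟶ M), P M → XMonic P f → HasSpecialNCokernel P n f)
    (XX : C → ℕ → C) (dd : ∀ A i, XX A i ⟶ XX A (i + 1)) (eX : ∀ A : C, XX A 0 = A)
    (hXexact : ∀ A, IsRightNExactSeq n (XX A) (dd A))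
    (hXP : ∀ A i, 1 ≤ i → i ≤ n → P (XX A i))
    (hXmono : ∀ A, XMonic P (dd A 0))
    -- the endofunctor `Σ` of Proposition 3.1
    (S : QObj P ⥤ QObj P) (hobj : ∀ A : C, S.obj (qObj P A) = qObj P (XX A (n + 1)))
    (hSadd : S.Additive)
    (hSmap : ∀ (A A' : C) (φ : A ⟶ A') (x : ∀ i, XX A i ⟶ XX A' i),
      x 0 = eqToHom (eX A) ≫ φ ≫ eqToHom (eX A').symm →
      (∀ i, dd A i ≫ x (i + 1) = x i ≫ dd A' i) →
      S.map (qMap P φ) = eqToHom (hobj A) ≫ qMap P (x (n + 1)) ≫ eqToHom (hobj A').symm)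
    (A : C) (T : PSeq (C := QObj P) (n + 2) S)
    (e0 : T.X 0 = qObj P A) (e1 : T.X 1 = qObj P A)
    (hT0 : T.f 0 = eqToHom (e0.trans e1.symm))
    (hTz : ∀ i, 2 ≤ i → i ≤ n + 1 → IsZero (T.X i)) :
    ∃ U, IsStdAngle P n XX dd eX S hobj U ∧ SeqIsoP U T := by
  have hm : 0 < n + 2 := by omega
  set wW := trivW P A XX dd eX n S hobj with hwW
  -- computation rules for the trivial sequence
  have tmid : ∀ {D : C} (u : trivSeqObj A (0 + 1) ⟶ D), trivSeqMap A 0 ≫ u = u :=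
    fun u => Category.id_comp u
  have qid : ∀ {Z : QObj P} (u : trivB P A (0 + 1) ⟶ Z), trivG P A 0 ≫ u = u :=
    fun u => Category.id_comp u
  have tmS : ∀ k, 1 ≤ k → trivSeqMap A k = 0 := by
    intro k hk
    obtain ⟨j, rfl⟩ : ∃ j, k = j + 1 := ⟨k - 1, by omega⟩
    rfl
  have hzero : ∀ {j : ℕ}, 2 ≤ j → IsZero (trivSeqObj A j) := fun hj => trivSeqObj_zero A hj
  have hdd : dd A 0 ≫ dd A 1 = 0 := by
    by_cases h2 : 2 ≤ n
    · exact ((hXexact A).1 0 (by omega)).1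
    · obtain rfl : n = 1 := by omega
      exact (hXexact A).2.1
  -- right n-exactness of the trivial sequence
  have h1 : IsRightNExactSeq n (trivSeqObj A) (trivSeqMap A) := by
    constructor
    · intro k hk
      constructor
      · rw [tmS (k + 1) (by omega)]
        simp
      · intro D h hcomp
        rcases k with _ | k
        · have hh : h = 0 := (tmid h).symm.trans hcomp
          exact ⟨0, by rw [hh]; simp⟩
        · exact ⟨0, (hzero (by omega)).eq_of_src _ _⟩
    · by_cases h2 : 2 ≤ n
      · obtain ⟨k, hk⟩ : ∃ k, n - 1 = k + 1 := ⟨n - 2, by omega⟩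
        rw [hk]
        refine ⟨by rw [tmS (k + 1 + 1) (by omega)]; simp, ?_⟩
        intro D h hcomp
        exact ⟨0, (hzero (by omega)).eq_of_src _ _, fun y hy => (hzero (by omega)).eq_of_src _ _⟩
      · obtain rfl : n = 1 := by omega
        refine ⟨?_, ?_⟩
        · exact (tmid _).trans (tmS 1 le_rfl)
        · intro D h hcomp
          have hh : h = 0 := (tmid h).symm.trans hcomp
          exact ⟨0, by rw [hh]; simp, fun y hy => (hzero (by omega)).eq_of_src _ _⟩
  -- X-monicity of the first morphism
  have h2mono : XMonic P (trivSeqMap A 0) := by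
    intro M hM u
    exact ⟨u, (tmid u).symm⟩
  -- comparison with the resolution of A
  have h4 : ∀ i, trivSeqMap A i ≫ trivCmp XX dd eX A (i + 1) =
      trivCmp XX dd eX A i ≫ dd A i := by
    intro i
    rcases i with _ | _ | k
    · exact (tmid _).trans rfl
    · show trivSeqMap A 1 ≫ trivCmp XX dd eX A 2 = trivCmp XX dd eX A 1 ≫ dd A 1
      simp [show trivCmp XX dd eX A 2 = 0 from rfl,
        show trivCmp XX dd eX A 1 = eqToHom (eX A).symm ≫ dd A 0 from rfl,
        show trivSeqMap A 1 = 0 from rfl, hdd]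
      exact (show (eqToHom (eX A).symm ≫ dd A 0) ≫ dd A 1 = 0 by rw [Category.assoc, hdd, Limits.comp_zero]).symm
    · exact (hzero (by omega)).eq_of_src _ _
  -- window computation
  have hwin1 : ∀ j (hj : j + 2 ≤ n + 2),
      perF S (n + 2) (trivB P A) (trivG P A) wW hm j =
        eqToHom (perX_lt S (n + 2) (trivB P A) hm (by omega)) ≫ trivG P A j ≫
          eqToHom (perX_lt S (n + 2) (trivB P A) hm (show j + 1 < n + 2 by omega)).symm := by
    intro j hj
    rw [perF, dif_pos (show j + 1 < n + 2 from by omega)]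
  -- the base comparison morphisms and their properties
  let b : ∀ j, j < n + 2 → (perX S (n + 2) (trivB P A) hm j ⟶ T.X j) :=
    fun j hj => eqToHom (perX_lt S (n + 2) (trivB P A) hm hj) ≫ stdBase P A T e0 e1 j
  have hplt : ∀ j (hj : j < n + 2),
      perPhi S (n + 2) (trivB P A) T hm b j = b j hj := by
    intro j hj
    rw [perPhi, dif_pos hj]
  have hbiso : ∀ j (hj : j < n + 2), IsIso (b j hj) := by
    intro j hj
    rcases j with _ | _ | k
    · show IsIso (eqToHom _ ≫ stdBase P A T e0 e1 0)
      rw [show stdBase P A T e0 e1 0 = eqToHom e0.symm from rfl]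
      exact IsIso.comp_isIso' (inferInstance : IsIso (eqToHom (perX_lt S (n + 2) (trivB P A) hm hj))) (inferInstance : IsIso (eqToHom e0.symm))
    · show IsIso (eqToHom _ ≫ stdBase P A T e0 e1 1)
      rw [show stdBase P A T e0 e1 1 = eqToHom e1.symm from rfl]
      exact IsIso.comp_isIso' (inferInstance : IsIso (eqToHom (perX_lt S (n + 2) (trivB P A) hm hj))) (inferInstance : IsIso (eqToHom e1.symm))
    · exact isIso_of_isZero
        ((isZero_qObj P (hzero (by omega))).of_iso
          (eqToIso (perX_lt S (n + 2) (trivB P A) hm hj)))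
        (hTz (k + 2) (by omega) (by omega)) _
  have hbase : ∀ i, i < n + 2 →
      perF S (n + 2) (trivB P A) (trivG P A) wW hm i ≫
          perPhi S (n + 2) (trivB P A) T hm b (i + 1) =
        perPhi S (n + 2) (trivB P A) T hm b i ≫ T.f i := by
    intro i hi
    rcases i with _ | _ | k
    · rw [hwin1 0 (by omega), hplt (0 + 1) (by omega), hplt 0 (by omega), hT0]
      simp only [b]
      rw [show stdBase P A T e0 e1 (0 + 1) = eqToHom e1.symm from rfl,
        show stdBase P A T e0 e1 0 = eqToHom e0.symm from rfl]
      simp only [Category.assoc]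
      rw [qid]
      simp [eqToHom_trans]
      erw [eqToHom_trans, eqToHom_trans, eqToHom_trans, eqToHom_trans, eqToHom_trans]
    · exact (hTz 2 (by omega) (by omega)).eq_of_tgt _ _
    · exact ((isZero_qObj P (hzero (by omega))).of_iso
        (eqToIso (perX_lt S (n + 2) (trivB P A) hm hi))).eq_of_src _ _
  refine ⟨thePSeq S (n + 2) (trivB P A) (trivG P A) wW hm,
    ⟨trivSeqObj A, trivSeqMap A, trivCmp XX dd eX A, h1, h2mono, rfl, h4,
      ⟨fun j hj => perX_lt S (n + 2) (trivB P A) hm (by omega),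
        fun j hj => hwin1 j hj, ?_⟩⟩,
    ⟨⟨perPhi S (n + 2) (trivB P A) T hm b,
        perPhi_comm S (n + 2) (trivB P A) (trivG P A) wW T hm b hbase,
        perPhi_add S (n + 2) (trivB P A) T hm b⟩,
      fun i => perPhi_isIso S (n + 2) (trivB P A) T hm b hbiso i⟩⟩
  -- the window condition on the last morphism
  rw [PSeq.wmap]
  show (perF S (n + 2) (trivB P A) (trivG P A) wW hm (n + 2 - 1) ≫ eqToHom _) ≫ eqToHom _ = _
  rw [perF, dif_neg (by omega), dif_pos (by omega)]
  simp only [Category.assoc, eqToHom_trans, eqToHom_trans_assoc, eqToHom_refl,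
    Category.comp_id, Category.id_comp]
  rw [hwW, trivW]
  simp only [Category.assoc]
  congr 1
  congr 1
  have key : ∀ {a b c d e : QObj P} (p : a = b) (q : b = c) (r : c = d) (s : d = e) (t : a = e),
      eqToHom p ≫ eqToHom q ≫ eqToHom r ≫ eqToHom s = eqToHom t := by
    intros; subst_vars; simp
  exact key _ _ _ _ _

end Thm34
end

section
/- In the setting of Theorem 3.4, for any morphism f : A → B in C, the composite morphism (f, α_0)^T : A → B ⊕ X_1, where α_0 : A → X_1 is a left X-approximation, is X-monic; consequently there exists a right (n+2)-angle in C/X whose first morphism is the class of f (axiom RN1(c)). -/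
open CategoryTheory Limits

universe v u

variable {C : Type u} [Category.{v} C]

section Machinery
variable {D : Type u} [Category.{v} D] [Preadditive D]

namespace Build

lemma psign_eqToHom_comp {k : ℕ} {A A' B B' : D} (e : A = A') (x : A' ⟶ B') (e' : B' = B) :
    psign k (eqToHom e ≫ x ≫ eqToHom e') = eqToHom e ≫ psign k x ≫ eqToHom e' := by
  unfold psign; split <;> simp

lemma psign_map_comp (k : ℕ) (F : D ⥤ D) {A B C' : D} (x : A ⟶ B) (y : B ⟶ C') :
    psign k (F.map x) ≫ F.map y = psign k (F.map (x ≫ y)) := by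
  unfold psign; split <;> simp

lemma map_comp_psign (k : ℕ) (F : D ⥤ D) {A B C' : D} (x : A ⟶ B) (y : B ⟶ C') :
    F.map x ≫ psign k (F.map y) = psign k (F.map (x ≫ y)) := by
  unfold psign; split <;> simp


lemma psign_map_comp' (k : ℕ) (F : D ⥤ D) {A B C' Z : D} (x : A ⟶ B) (y : B ⟶ C')
    (h : F.obj C' ⟶ Z) :
    psign k (F.map x) ≫ F.map y ≫ h = psign k (F.map (x ≫ y)) ≫ h := by
  rw [← Category.assoc, psign_map_comp]

lemma map_comp_psign' (k : ℕ) (F : D ⥤ D) {A B C' Z : D} (x : A ⟶ B) (y : B ⟶ C')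
    (h : F.obj C' ⟶ Z) :
    F.map x ≫ psign k (F.map y) ≫ h = psign k (F.map (x ≫ y)) ≫ h := by
  rw [← Category.assoc, map_comp_psign]

/-- Transport of right `n`-exactness along pointwise isomorphic (equal) sequences. -/
lemma transport_exact {n : ℕ} {Y Z : ℕ → D} {d : ∀ i, Y i ⟶ Y (i + 1)}
    (fz : ∀ i, Z i ⟶ Z (i + 1)) (e : ∀ i, i ≤ n + 1 → Z i = Y i)
    (hfz : ∀ i (h : i + 1 ≤ n + 1),
      fz i = eqToHom (e i (by omega)) ≫ d i ≫ eqToHom (e (i + 1) h).symm)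
    (hn : 1 ≤ n) (h : IsRightNExactSeq n Y d) : IsRightNExactSeq n Z fz := by
  obtain ⟨hweak, hcok⟩ := h
  constructor
  · intro kk hkk
    obtain ⟨hz, hfac⟩ := hweak kk hkk
    constructor
    · rw [hfz kk (by omega), hfz (kk + 1) (by omega)]
      simp only [Category.assoc, eqToHom_trans_assoc, eqToHom_refl, Category.id_comp]
      rw [reassoc_of% hz]
      simp
    · intro E hmor hcomp
      have side : d kk ≫ eqToHom (e (kk + 1) (by omega)).symm ≫ hmor = 0 := by
        rw [hfz kk (by omega)] at hcomp
        rw [← cancel_epi (eqToHom (e kk (by omega : kk ≤ n + 1)))]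
        simpa using hcomp
      obtain ⟨t, ht⟩ := hfac (eqToHom (e (kk + 1) (by omega)).symm ≫ hmor) side
      refine ⟨eqToHom (e (kk + 2) (by omega)) ≫ t, ?_⟩
      rw [hfz (kk + 1) (by omega)]
      simp only [Category.assoc, eqToHom_trans_assoc, eqToHom_refl, Category.id_comp]
      rw [← ht]
      simp
  · obtain ⟨hz, hfac⟩ := hcok
    constructor
    · rw [hfz (n - 1) (by omega), hfz (n - 1 + 1) (by omega)]
      simp only [Category.assoc, eqToHom_trans_assoc, eqToHom_refl, Category.id_comp]
      rw [reassoc_of% hz]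
      simp
    · intro E hmor hcomp
      have side : d (n - 1) ≫ eqToHom (e (n - 1 + 1) (by omega)).symm ≫ hmor = 0 := by
        rw [hfz (n - 1) (by omega)] at hcomp
        rw [← cancel_epi (eqToHom (e (n - 1) (by omega : n - 1 ≤ n + 1)))]
        simpa using hcomp
      obtain ⟨t, ht, huniq⟩ := hfac (eqToHom (e (n - 1 + 1) (by omega)).symm ≫ hmor) side
      refine ⟨eqToHom (e (n - 1 + 1 + 1) (by omega)) ≫ t, ?_, ?_⟩
      · rw [hfz (n - 1 + 1) (by omega)]
        simp only [Category.assoc, eqToHom_trans_assoc, eqToHom_refl, Category.id_comp]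
        rw [← ht]
        simp
      · intro y hy
        have : eqToHom (e (n - 1 + 1 + 1) (by omega)).symm ≫ y = t := by
          apply huniq
          rw [hy, hfz (n - 1 + 1) (by omega)]
          simp
        rw [← this]
        simp


variable (S : D ⥤ D) (m : ℕ)

noncomputable def bX (W : ℕ → D) (hm : 1 ≤ m) : ℕ → D
  | i => if h : i < m then W i else S.obj (bX W hm (i - m))
termination_by i => i
decreasing_by omega

variable (W : ℕ → D) (hm : 1 ≤ m)

lemma bX_lt {i : ℕ} (h : i < m) : bX S m W hm i = W i := by
  rw [bX]; exact dif_pos h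

lemma bX_ge {i : ℕ} (h : m ≤ i) : bX S m W hm i = S.obj (bX S m W hm (i - m)) := by
  rw [bX]; exact dif_neg (by omega)

lemma bX_per (i : ℕ) : bX S m W hm (m + i) = S.obj (bX S m W hm i) := by
  rw [bX_ge S m W hm (Nat.le_add_right m i), Nat.add_sub_cancel_left]

lemma bX_succ_last {i : ℕ} (h1 : ¬ i + 1 < m) (h2 : i < m) :
    bX S m W hm (i + 1) = S.obj (W 0) := by
  rw [bX_ge S m W hm (by omega), show i + 1 - m = 0 by omega, bX_lt S m W hm hm]

lemma bX_succ_ge {i : ℕ} (h : m ≤ i) :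
    bX S m W hm (i + 1) = S.obj (bX S m W hm (i - m + 1)) := by
  rw [bX_ge S m W hm (by omega), show i + 1 - m = i - m + 1 by omega]

variable (g : ∀ j, W j ⟶ W (j + 1)) (w : W (m - 1) ⟶ S.obj (W 0))

noncomputable def bf : ∀ i, bX S m W hm i ⟶ bX S m W hm (i + 1)
  | i =>
    if h1 : i + 1 < m then
      eqToHom (bX_lt S m W hm (by omega)) ≫ g i ≫ eqToHom (bX_lt S m W hm h1).symm
    else if h2 : i < m then
      eqToHom ((bX_lt S m W hm h2).trans (congrArg W (by omega : i = m - 1))) ≫ w ≫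
        eqToHom (bX_succ_last S m W hm h1 h2).symm
    else
      eqToHom (bX_ge S m W hm (by omega)) ≫ psign m (S.map (bf (i - m))) ≫
        eqToHom (bX_succ_ge S m W hm (by omega)).symm
termination_by i => i
decreasing_by omega

lemma bf_win {i : ℕ} (h1 : i + 1 < m) :
    bf S m W hm g w i =
      eqToHom (bX_lt S m W hm (by omega)) ≫ g i ≫ eqToHom (bX_lt S m W hm h1).symm := by
  rw [bf]; exact dif_pos h1

lemma bf_last {i : ℕ} (h1 : ¬ i + 1 < m) (h2 : i < m) :
    bf S m W hm g w i =
      eqToHom ((bX_lt S m W hm h2).trans (congrArg W (by omega : i = m - 1))) ≫ w ≫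
        eqToHom (bX_succ_last S m W hm h1 h2).symm := by
  rw [bf]; rw [dif_neg h1, dif_pos h2]

lemma bf_ge {i : ℕ} (h : m ≤ i) :
    bf S m W hm g w i =
      eqToHom (bX_ge S m W hm h) ≫ psign m (S.map (bf S m W hm g w (i - m))) ≫
        eqToHom (bX_succ_ge S m W hm h).symm := by
  rw [bf]; rw [dif_neg (by omega), dif_neg (by omega)]

lemma bf_congr {j j' : ℕ} (h : j = j') :
    bf S m W hm g w j =
      eqToHom (congrArg (bX S m W hm) h) ≫ bf S m W hm g w j' ≫
        eqToHom (congrArg (bX S m W hm) (congrArg (· + 1) h)).symm := by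
  subst h; simp

lemma bf_per (i : ℕ) :
    bf S m W hm g w (m + i) =
      eqToHom (bX_per S m W hm i) ≫ psign m (S.map (bf S m W hm g w i)) ≫
        eqToHom (bX_per S m W hm (i + 1)).symm := by
  rw [bf_ge S m W hm g w (Nat.le_add_right m i),
    bf_congr S m W hm g w (show m + i - m = i by omega)]
  simp only [Functor.map_comp, eqToHom_map, psign_eqToHom_comp, Category.assoc,
    eqToHom_trans, eqToHom_trans_assoc]

/-- The `m`-`Σ`-sequence built from window data. -/
noncomputable def bSeq : PSeq m S where
  X := bX S m W hm
  f := bf S m W hm g w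
  per := bX_per S m W hm
  fper := bf_per S m W hm g w

lemma bSeq_window : IsWindowOf hm (bSeq S m W hm g w) W g w := by
  refine ⟨fun j hj => bX_lt S m W hm (by omega), fun j hj => ?_, ?_⟩
  · exact bf_win S m W hm g w (by omega)
  · show (bf S m W hm g w (m - 1) ≫ _) ≫ _ = _
    rw [bf_last S m W hm g w (by omega) (by omega)]
    simp only [bSeq, Category.assoc, eqToHom_trans, eqToHom_refl, Category.comp_id]
    erw [eqToHom_trans, eqToHom_trans, eqToHom_refl, Category.comp_id]

variable (W' : ℕ → D) (g' : ∀ j, W' j ⟶ W' (j + 1)) (w' : W' (m - 1) ⟶ S.obj (W' 0))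
variable (φ : ∀ j, W j ⟶ W' j)

noncomputable def bφ : ∀ i, bX S m W hm i ⟶ bX S m W' hm i
  | i =>
    if h : i < m then
      eqToHom (bX_lt S m W hm h) ≫ φ i ≫ eqToHom (bX_lt S m W' hm h).symm
    else
      eqToHom (bX_ge S m W hm (by omega)) ≫ S.map (bφ (i - m)) ≫
        eqToHom (bX_ge S m W' hm (by omega)).symm
termination_by i => i
decreasing_by omega

lemma bφ_lt {i : ℕ} (h : i < m) :
    bφ S m W hm W' φ i =
      eqToHom (bX_lt S m W hm h) ≫ φ i ≫ eqToHom (bX_lt S m W' hm h).symm := by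
  rw [bφ]; exact dif_pos h

lemma bφ_ge {i : ℕ} (h : m ≤ i) :
    bφ S m W hm W' φ i =
      eqToHom (bX_ge S m W hm h) ≫ S.map (bφ S m W hm W' φ (i - m)) ≫
        eqToHom (bX_ge S m W' hm h).symm := by
  rw [bφ]; rw [dif_neg (by omega)]

lemma bφ_congr {j j' : ℕ} (h : j = j') :
    bφ S m W hm W' φ j =
      eqToHom (congrArg (bX S m W hm) h) ≫ bφ S m W hm W' φ j' ≫
        eqToHom (congrArg (bX S m W' hm) h).symm := by
  subst h; simp

lemma bφ_per (i : ℕ) :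
    bφ S m W hm W' φ (m + i) =
      eqToHom (bX_per S m W hm i) ≫ S.map (bφ S m W hm W' φ i) ≫
        eqToHom (bX_per S m W' hm i).symm := by
  rw [bφ_ge S m W hm W' φ (Nat.le_add_right m i),
    bφ_congr S m W hm W' φ (show m + i - m = i by omega)]
  simp only [Functor.map_comp, eqToHom_map, Category.assoc, eqToHom_trans, eqToHom_trans_assoc]

lemma bφ_comm
    (hw : ∀ j, j + 2 ≤ m → g j ≫ φ (j + 1) = φ j ≫ g' j)
    (hl : w ≫ S.map (φ 0) = φ (m - 1) ≫ w') :
    ∀ i, bf S m W hm g w i ≫ bφ S m W hm W' φ (i + 1) =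
      bφ S m W hm W' φ i ≫ bf S m W' hm g' w' i := by
  intro i
  induction i using Nat.strong_induction_on with
  | _ i ih =>
    by_cases h1 : i + 1 < m
    · rw [bf_win S m W hm g w h1, bf_win S m W' hm g' w' h1,
        bφ_lt S m W hm W' φ (i := i + 1) h1, bφ_lt S m W hm W' φ (i := i) (by omega)]
      simp only [Category.assoc, eqToHom_trans_assoc, eqToHom_refl, Category.id_comp]
      rw [reassoc_of% (hw i (by omega))]
    · by_cases h2 : i < m
      · have hi : i = m - 1 := by omega
        subst hi
        rw [bf_last S m W hm g w h1 h2, bf_last S m W' hm g' w' h1 h2,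
          bφ_lt S m W hm W' φ h2,
          bφ_ge S m W hm W' φ (by omega : m ≤ m - 1 + 1),
          bφ_congr S m W hm W' φ (show m - 1 + 1 - m = 0 by omega),
          bφ_lt S m W hm W' φ (by omega : 0 < m)]
        simp only [Functor.map_comp, eqToHom_map, Category.assoc, eqToHom_trans_assoc,
          eqToHom_refl, Category.id_comp]
        rw [reassoc_of% hl]
        simp only [eqToHom_trans]
      · have h : m ≤ i := by omega
        rw [bf_ge S m W hm g w h, bf_ge S m W' hm g' w' h,
          bφ_ge S m W hm W' φ h,
          bφ_ge S m W hm W' φ (by omega : m ≤ i + 1),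
          bφ_congr S m W hm W' φ (show i + 1 - m = i - m + 1 by omega)]
        simp only [Functor.map_comp, eqToHom_map, Category.assoc, eqToHom_trans_assoc,
          eqToHom_refl, Category.id_comp, eqToHom_trans]
        rw [psign_map_comp' m S, map_comp_psign' m S, ih (i - m) (by omega)]

/-- The morphism of built sequences induced by a window morphism. -/
noncomputable def bHom
    (hw : ∀ j, j + 2 ≤ m → g j ≫ φ (j + 1) = φ j ≫ g' j)
    (hl : w ≫ S.map (φ 0) = φ (m - 1) ≫ w') :
    SeqHomP (bSeq S m W hm g w) (bSeq S m W' hm g' w') where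
  φ := bφ S m W hm W' φ
  comm := bφ_comm S m W hm g w W' g' w' φ hw hl
  compat := bφ_per S m W hm W' φ

lemma bφ_isIso (hiso : ∀ j, j < m → IsIso (φ j)) (i : ℕ) :
    IsIso (bφ S m W hm W' φ i) := by
  induction i using Nat.strong_induction_on with
  | _ i ih =>
    by_cases h : i < m
    · rw [bφ_lt S m W hm W' φ h]
      have := hiso i h
      infer_instance
    · rw [bφ_ge S m W hm W' φ (by omega)]
      have := ih (i - m) (by omega)
      infer_instance

end Build
end Machinery

section Helpers
variable [Preadditive C]

lemma xMonic_conj (P : C → Prop) {A A' B B' : C} (e : A' = A) (e' : B = B') {f : A ⟶ B}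
    (hf : XMonic P f) : XMonic P (eqToHom e ≫ f ≫ eqToHom e') := by
  intro M hM g
  obtain ⟨h, hh⟩ := hf hM (eqToHom e.symm ≫ g)
  refine ⟨eqToHom e'.symm ≫ h, ?_⟩
  have h2 := congrArg (fun z => eqToHom e ≫ z) hh
  simp only [eqToHom_trans_assoc, eqToHom_refl, Category.id_comp] at h2
  simp only [Category.assoc, eqToHom_trans_assoc, eqToHom_refl, Category.id_comp]
  exact h2

lemma eqToHom_conj_id {X X' Y Y' : C} (p : X' = X) (q : Y = Y') (f : X ⟶ Y) (g : X' ⟶ Y')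
    (h : HEq f g) : eqToHom p ≫ f ≫ eqToHom q = g := by
  subst p; subst q; rw [eq_of_heq h]; simp

lemma qMap_eq (P : C → Prop) {A B : C} {x y : A ⟶ B} (h : -x + y ∈ xSub P A B) :
    qMap P x = qMap P y := (QuotientAddGroup.eq).mpr h


lemma qMap_eq_of_factor (P : C → Prop) {A B M : C} {x y : A ⟶ B} (u : A ⟶ M) (v : M ⟶ B)
    (hM : P M) (h : y = x + u ≫ v) : qMap P x = qMap P y := by
  subst h
  refine qMap_eq P ?_
  have e : -x + (x + u ≫ v) = u ≫ v := by abel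
  rw [e]
  exact AddSubgroup.subset_closure ⟨M, u, v, hM, rfl⟩

/-- The middle objects of the constructed right `n`-exact sequence. -/
def midSeq (A AB : C) (Y XA : ℕ → C) (n : ℕ) : ℕ → C
  | 0 => A
  | 1 => AB
  | (i + 2) => if i + 2 ≤ n + 1 then Y (i + 2) else XA (i + 2)

lemma midSeq_le (A AB : C) (Y XA : ℕ → C) (n : ℕ) {i : ℕ} (h2 : 2 ≤ i) (h : i ≤ n + 1) :
    midSeq A AB Y XA n i = Y i := by
  obtain ⟨j, rfl⟩ : ∃ j, i = j + 2 := ⟨i - 2, by omega⟩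
  exact if_pos h

lemma midSeq_big (A AB : C) (Y XA : ℕ → C) (n : ℕ) {i : ℕ} (h : n + 2 ≤ i) :
    midSeq A AB Y XA n i = XA i := by
  obtain ⟨j, rfl⟩ : ∃ j, i = j + 2 := ⟨i - 2, by omega⟩
  exact if_neg (by omega)

variable [HasZeroObject C] [HasFiniteBiproducts C] [HasBinaryBiproducts C]

/-- Window objects of the target right angle. -/
def wObj (P : C → Prop) (A B : C) (Aseq : ℕ → C) : ℕ → QObj P
  | 0 => qObj P A
  | 1 => qObj P B
  | (j + 2) => qObj P (Aseq (j + 2))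

/-- Window maps of the target right angle. -/
def wMap (P : C → Prop) {A B : C} (Aseq : ℕ → C) (fs : ∀ i, Aseq i ⟶ Aseq (i + 1))
    (f0 : qObj P A ⟶ qObj P B) (f1 : qObj P B ⟶ qObj P (Aseq 2)) :
    ∀ j, wObj P A B Aseq j ⟶ wObj P A B Aseq (j + 1)
  | 0 => f0
  | 1 => f1
  | (j + 2) => qMap P (fs (j + 2))

/-- The comparison morphism between the windows. -/
def wPhi (P : C → Prop) {A B : C} (Aseq : ℕ → C)
    (p0 : qObj P (Aseq 0) ⟶ qObj P A) (p1 : qObj P (Aseq 1) ⟶ qObj P B) :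
    ∀ j, qObj P (Aseq j) ⟶ wObj P A B Aseq j
  | 0 => p0
  | 1 => p1
  | (j + 2) => 𝟙 _

end Helpers

section Thm34
variable [Preadditive C] [HasZeroObject C] [HasFiniteBiproducts C] [HasBinaryBiproducts C]

set_option maxHeartbeats 3200000 in
/-- RN1(c) in Theorem 3.4. For any morphism `f : A ⟶ B` in `C`, the
morphism `(f, α 0)ᵀ : A ⟶ B ⊞ X 1`, where `α 0` is the chosen left `X`-approximation of
`A`, is `X`-monic; consequently there is a right `(n+2)`-angle in `C/X` whose first
morphism is the class of `f`. -/
theorem exists_right_angle_on_f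
    (P : C → Prop) (n : ℕ) (hn : 1 ≤ n)
    (hPiso : ∀ {A B : C}, P A → (A ≅ B) → P B)
    (hPsum : ∀ {A B : C}, P A → P B → P (A ⊞ B))
    (hPsummand : ∀ {A M : C}, P M → ∀ (i : A ⟶ M) (p : M ⟶ A), i ≫ p = 𝟙 A → P A)
    (hCov : ∀ A : C, ∃ (M : C) (f : A ⟶ M), P M ∧ XMonic P f)
    (hNCok : ∀ {A B : C} (f : A ⟶ B), XMonic P f → HasNCokernel n f)
    (hSpecial : ∀ {A M : C} (f : A ⟶ M), P M → XMonic P f → HasSpecialNCokernel P n f)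
    (XX : C → ℕ → C) (dd : ∀ A i, XX A i ⟶ XX A (i + 1)) (eX : ∀ A : C, XX A 0 = A)
    (hXexact : ∀ A, IsRightNExactSeq n (XX A) (dd A))
    (hXP : ∀ A i, 1 ≤ i → i ≤ n → P (XX A i))
    (hXmono : ∀ A, XMonic P (dd A 0))
    -- the endofunctor `Σ` of Proposition 3.1
    (S : QObj P ⥤ QObj P) (hobj : ∀ A : C, S.obj (qObj P A) = qObj P (XX A (n + 1)))
    (hSadd : S.Additive)
    (hSmap : ∀ (A A' : C) (φ : A ⟶ A') (x : ∀ i, XX A i ⟶ XX A' i),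
      x 0 = eqToHom (eX A) ≫ φ ≫ eqToHom (eX A').symm →
      (∀ i, dd A i ≫ x (i + 1) = x i ≫ dd A' i) →
      S.map (qMap P φ) = eqToHom (hobj A) ≫ qMap P (x (n + 1)) ≫ eqToHom (hobj A').symm)
    {A B : C} (f : A ⟶ B) :
    XMonic P (biprod.lift f (eqToHom (eX A).symm ≫ dd A 0)) ∧
    ∃ T : PSeq (C := QObj P) (n + 2) S,
      (∃ U, IsStdAngle P n XX dd eX S hobj U ∧ SeqIsoP U T) ∧
      ∃ (e0 : T.X 0 = qObj P A) (e1 : T.X 1 = qObj P B),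
        T.f 0 = eqToHom e0 ≫ qMap P f ≫ eqToHom e1.symm := by
  obtain ⟨k, rfl⟩ : ∃ k, n = k + 1 := ⟨n - 1, by omega⟩
  have hmono : XMonic P (biprod.lift f (eqToHom (eX A).symm ≫ dd A 0)) := by
    intro M hM g
    obtain ⟨h, hh⟩ := hXmono A hM (eqToHom (eX A) ≫ g)
    refine ⟨biprod.snd ≫ h, ?_⟩
    have h2 := congrArg (fun z => eqToHom (eX A).symm ≫ z) hh
    simp only [eqToHom_trans_assoc, eqToHom_refl, Category.id_comp] at h2
    rw [h2]
    conv_rhs => rw [← Category.assoc, biprod.lift_snd]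
    rw [Category.assoc]
  refine ⟨hmono, ?_⟩
  obtain ⟨Y, d, e0, e1, hd0, hexact⟩ := hNCok _ hmono
  set As : ℕ → C := midSeq A (B ⊞ XX A 1) Y (XX A) (k + 1) with hAs
  have AeqY : ∀ i, i ≤ k + 2 → As i = Y i := by
    intro i hi
    match i with
    | 0 => exact e0.symm
    | 1 => exact e1.symm
    | (j + 2) => exact midSeq_le _ _ _ _ _ (by omega) (by omega : j + 2 ≤ (k + 1) + 1)
  have Abig : ∀ i, k + 3 ≤ i → As i = XX A i := fun i hi =>
    midSeq_big _ _ _ _ _ (by omega)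
  set fs0 : ∀ i, As i ⟶ As (i + 1) := fun i =>
    if h : i ≤ k + 1 then
      eqToHom (AeqY i (by omega)) ≫ d i ≫ eqToHom (AeqY (i + 1) (by omega)).symm
    else 0 with hfs0def
  have hfs0 : ∀ i (hi : i ≤ k + 1), fs0 i =
      eqToHom (AeqY i (by omega)) ≫ d i ≫ eqToHom (AeqY (i + 1) (by omega)).symm := by
    intro i hi
    simp only [hfs0def]
    rw [dif_pos hi]
  have hexact' : IsRightNExactSeq (k + 1) As fs0 :=
    Build.transport_exact fs0 AeqY (fun i h => hfs0 i (by omega)) (by omega) hexact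
  have hfs00 : fs0 0 = biprod.lift f (eqToHom (eX A).symm ≫ dd A 0) := by
    rw [hfs0 0 (by omega), hd0]
    simp only [Category.assoc, eqToHom_trans, eqToHom_trans_assoc]
    exact eqToHom_conj_id _ _ _ _ HEq.rfl
  have hXm0 : XMonic P (fs0 0) := by
    rw [hfs00]; exact hmono
  have chain : ∀ N : ℕ, ∃ a : ∀ i, As i ⟶ XX A i,
      a 0 = eqToHom (eX A).symm ∧
      ∀ i, i + 1 ≤ N → i ≤ k + 1 → fs0 i ≫ a (i + 1) = a i ≫ dd A i := by
    intro N
    induction N with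
    | zero =>
      set a0 : ∀ i, As i ⟶ XX A i := fun i =>
        if h : i = 0 then eqToHom (show As i = XX A i from by rw [h]; exact (eX A).symm)
        else 0 with ha0def
      refine ⟨a0, ?_, fun i h1 h2 => by omega⟩
      rw [ha0def]
      exact dif_pos rfl
    | succ N ihN =>
      obtain ⟨a, ha0, hch⟩ := ihN
      by_cases hN : N ≤ k + 1
      · have hb : ∃ b : As (N + 1) ⟶ XX A (N + 1), fs0 N ≫ b = a N ≫ dd A N := by
          rcases N with _ | M
          · obtain ⟨b, hb⟩ := hXm0 (hXP A 1 (by omega) (by omega)) (a 0 ≫ dd A 0)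
            exact ⟨b, hb.symm⟩
          · have hdd : dd A M ≫ dd A (M + 1) = 0 := by
              rcases le_or_gt (M + 2) (k + 1) with h | h
              · exact ((hXexact A).1 M (by omega)).1
              · have hM : M = k := by omega
                subst hM
                exact (hXexact A).2.1
            have hcomp : fs0 M ≫ (a (M + 1) ≫ dd A (M + 1)) = 0 := by
              rw [reassoc_of% (hch M (by omega) (by omega)), hdd, comp_zero]
            rcases le_or_gt (M + 2) (k + 1) with h | h
            · obtain ⟨t, ht⟩ := (hexact'.1 M (by omega)).2 (a (M + 1) ≫ dd A (M + 1)) hcomp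
              exact ⟨t, ht.symm⟩
            · have hM : M = k := by omega
              subst hM
              obtain ⟨t, ht, -⟩ := hexact'.2.2 (a (M + 1) ≫ dd A (M + 1)) hcomp
              exact ⟨t, ht.symm⟩
        obtain ⟨b, hbb⟩ := hb
        set a' : ∀ i, As i ⟶ XX A i := fun i =>
          if h : i = N + 1 then eqToHom (congrArg As h) ≫ b ≫ eqToHom (congrArg (XX A) h).symm
          else a i with ha'def
        have ha'ne : ∀ i, i ≠ N + 1 → a' i = a i := by
          intro i hi; rw [ha'def]; exact dif_neg hi
        have ha'eq : a' (N + 1) = b := by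
          rw [ha'def]
          exact (dif_pos rfl).trans (by simp)
        refine ⟨a', ?_, ?_⟩
        · rw [ha'ne 0 (by omega)]; exact ha0
        · intro i h1 h2
          rcases Nat.lt_or_ge i N with hi | hi
          · rw [ha'ne (i + 1) (by omega), ha'ne i (by omega)]
            exact hch i (by omega) h2
          · have hiN : i = N := by omega
            subst hiN
            rw [ha'eq, ha'ne i (by omega)]
            exact hbb
      · exact ⟨a, ha0, fun i h1 h2 => hch i (by omega) h2⟩
  obtain ⟨a, ha0, hch⟩ := chain (k + 2)
  set aT : ∀ i, As i ⟶ XX A i := fun i =>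
    if h : i ≤ k + 2 then a i else eqToHom (Abig i (by omega)) with haTdef
  have haT_le : ∀ i, i ≤ k + 2 → aT i = a i := by
    intro i hi; simp only [haTdef]; rw [dif_pos hi]
  have haT_big : ∀ i (hi : k + 3 ≤ i), aT i = eqToHom (Abig i hi) := by
    intro i hi; simp only [haTdef]; rw [dif_neg (by omega)]
  set fsF : ∀ i, As i ⟶ As (i + 1) := fun i =>
    if h : i ≤ k + 1 then fs0 i
    else if h2 : i = k + 2 then
      eqToHom (congrArg As h2) ≫
        (aT (k + 2) ≫ dd A (k + 2) ≫ eqToHom (Abig (k + 3) (by omega)).symm) ≫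
        eqToHom (congrArg As (congrArg (· + 1) h2)).symm
    else eqToHom (Abig i (by omega)) ≫ dd A i ≫ eqToHom (Abig (i + 1) (by omega)).symm
    with hfsFdef
  have hfsF_le : ∀ i, i ≤ k + 1 → fsF i = fs0 i := by
    intro i hi; simp only [hfsFdef]; rw [dif_pos hi]
  have hfsF_mid : fsF (k + 2) =
      aT (k + 2) ≫ dd A (k + 2) ≫ eqToHom (Abig (k + 3) (by omega)).symm := by
    rw [hfsFdef]
    exact (dif_neg (by omega)).trans ((dif_pos rfl).trans (by simp))
  have hfsF_big : ∀ i (hi : k + 3 ≤ i), fsF i =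
      eqToHom (Abig i hi) ≫ dd A i ≫ eqToHom (Abig (i + 1) (by omega)).symm := by
    intro i hi; simp only [hfsFdef]; rw [dif_neg (by omega), dif_neg (by omega)]
  have hexactF : IsRightNExactSeq (k + 1) As fsF := by
    obtain ⟨u1, u2⟩ := hexact'
    constructor
    · intro kk hkk
      rw [hfsF_le kk (by omega), hfsF_le (kk + 1) (by omega)]
      exact u1 kk hkk
    · rw [hfsF_le (k + 1 - 1) (by omega), hfsF_le (k + 1 - 1 + 1) (by omega)]
      exact u2
  have hXmF : XMonic P (fsF 0) := by
    rw [hfsF_le 0 (by omega)]; exact hXm0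
  have chainF : ∀ i, fsF i ≫ aT (i + 1) = aT i ≫ dd A i := by
    intro i
    rcases le_or_gt i (k + 1) with hi | hi
    · rw [hfsF_le i hi, haT_le i (by omega), haT_le (i + 1) (by omega)]
      exact hch i (by omega) (by omega)
    by_cases hi2 : i = k + 2
    · subst hi2
      rw [hfsF_mid, haT_big (k + 3) (by omega), haT_le (k + 2) (by omega)]
      simp only [Category.assoc, eqToHom_trans, eqToHom_refl, Category.comp_id]
    · rw [hfsF_big i (by omega), haT_big i (by omega), haT_big (i + 1) (by omega)]
      simp only [Category.assoc, eqToHom_trans, eqToHom_refl, Category.comp_id,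
        eqToHom_trans_assoc, Category.id_comp]
  have ha0T : aT 0 = eqToHom (eX A).symm := by
    rw [haT_le 0 (by omega)]; exact ha0
  have hfsF0 : fsF 0 = biprod.lift f (eqToHom (eX A).symm ≫ dd A 0) := by
    rw [hfsF_le 0 (by omega)]; exact hfs00
  -- the standard angle U and the target angle T
  refine ⟨Build.bSeq S (k + 1 + 2) (wObj P A B As) (by omega)
      (wMap P As fsF (qMap P f) (qMap P (biprod.inl ≫ fsF 1)))
      (psign (k + 1) (qMap P (aT (k + 2))) ≫ eqToHom (hobj A).symm), ?_,
    Build.bX_lt S (k + 1 + 2) (wObj P A B As) (by omega) (i := 0) (by omega),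
    Build.bX_lt S (k + 1 + 2) (wObj P A B As) (by omega) (i := 1) (by omega), ?_⟩
  · refine ⟨Build.bSeq S (k + 1 + 2) (fun j => qObj P (As j)) (by omega)
        (fun j => qMap P (fsF j))
        (psign (k + 1) (qMap P (aT (k + 2))) ≫ eqToHom (hobj A).symm), ?_, ?_⟩
    · exact ⟨As, fsF, aT, hexactF, hXmF, ha0T, chainF,
        Build.bSeq_window S (k + 1 + 2) (fun j => qObj P (As j)) (by omega)
          (fun j => qMap P (fsF j))
          (psign (k + 1) (qMap P (aT (k + 2))) ≫ eqToHom (hobj A).symm)⟩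
    · refine ⟨Build.bHom S (k + 1 + 2) (fun j => qObj P (As j)) (by omega)
          (fun j => qMap P (fsF j))
          (psign (k + 1) (qMap P (aT (k + 2))) ≫ eqToHom (hobj A).symm)
          (wObj P A B As)
          (wMap P As fsF (qMap P f) (qMap P (biprod.inl ≫ fsF 1)))
          (psign (k + 1) (qMap P (aT (k + 2))) ≫ eqToHom (hobj A).symm)
          (wPhi P As (𝟙 (qObj P A)) (qMap P biprod.fst)) ?_ ?_,
        fun i => Build.bφ_isIso S (k + 1 + 2) (fun j => qObj P (As j)) (by omega)
          (wObj P A B As) (wPhi P As (𝟙 (qObj P A)) (qMap P biprod.fst)) ?_ i⟩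
      · -- window commutation
        intro j hj
        match j with
        | 0 =>
          show qMap P (fsF 0) ≫ qMap P biprod.fst = 𝟙 (qObj P A) ≫ qMap P f
          rw [Category.id_comp]
          show qMap P (fsF 0 ≫ biprod.fst) = qMap P f
          congr 1
          rw [hfsF0]
          exact biprod.lift_fst _ _
        | 1 =>
          show qMap P (fsF 1) ≫ 𝟙 (qObj P (As 2)) = qMap P biprod.fst ≫ qMap P (biprod.inl ≫ fsF 1)
          rw [Category.comp_id]
          show qMap P (fsF 1) = qMap P (biprod.fst ≫ biprod.inl ≫ fsF 1)
          refine qMap_eq_of_factor P biprod.snd (-(biprod.inr ≫ fsF 1))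
            (hXP A 1 (by omega) (by omega)) ?_
          have key : ∀ {Z : C} (x : B ⊞ XX A 1 ⟶ Z),
              biprod.fst ≫ biprod.inl ≫ x = x + biprod.snd ≫ (-(biprod.inr ≫ x)) := by
            intro Z x
            rw [← Category.assoc,
              show biprod.fst ≫ biprod.inl = 𝟙 (B ⊞ XX A 1) - biprod.snd ≫ biprod.inr from
                eq_sub_of_add_eq biprod.total,
              Preadditive.sub_comp, Category.id_comp]
            simp only [Category.assoc, Preadditive.comp_neg]
            rw [sub_eq_add_neg]
          exact key (fsF 1)
        | (j + 2) =>
          show qMap P (fsF (j + 2)) ≫ 𝟙 _ = 𝟙 _ ≫ qMap P (fsF (j + 2))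
          simp
      · -- last square
        show (psign (k + 1) (qMap P (aT (k + 2))) ≫ eqToHom (hobj A).symm) ≫
            S.map (𝟙 (qObj P A)) = 𝟙 (qObj P (As (k + 2))) ≫
            (psign (k + 1) (qMap P (aT (k + 2))) ≫ eqToHom (hobj A).symm)
        rw [CategoryTheory.Functor.map_id]
        simp
      · -- isomorphisms
        intro j hj
        match j with
        | 0 => exact inferInstanceAs (IsIso (𝟙 (qObj P A)))
        | 1 =>
          refine ⟨⟨qMap P biprod.inl, ?_, ?_⟩⟩
          · show qMap P (biprod.fst ≫ biprod.inl) = qMap P (𝟙 (B ⊞ XX A 1))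
            exact qMap_eq_of_factor P biprod.snd biprod.inr
              (hXP A 1 (by omega) (by omega)) biprod.total.symm
          · show qMap P (biprod.inl ≫ biprod.fst) = qMap P (𝟙 B)
            exact congrArg (QuotientAddGroup.mk) biprod.inl_fst
        | (j + 2) => exact inferInstanceAs (IsIso (𝟙 (qObj P (As (j + 2)))))
  · -- the first morphism of T
    show Build.bf S (k + 1 + 2) (wObj P A B As) (by omega)
      (wMap P As fsF (qMap P f) (qMap P (biprod.inl ≫ fsF 1)))
      (psign (k + 1) (qMap P (aT (k + 2))) ≫ eqToHom (hobj A).symm) 0 = _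
    rw [Build.bf_win S (k + 1 + 2) (wObj P A B As) (by omega)
      (wMap P As fsF (qMap P f) (qMap P (biprod.inl ≫ fsF 1)))
      (psign (k + 1) (qMap P (aT (k + 2))) ≫ eqToHom (hobj A).symm)
      (i := 0) (by omega)]
    rfl

end Thm34
end
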